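/- arXiv:2005.11121 — 2 statements merged into one kernel-verified Lean document; each statement's English description precedes it below -/
import Mathlib

section
/- Let X satisfy the two-sided tail condition with index α ∈ (0,1). Then limsup_{t→0} |1 − φ(t)| / (|t|^α ℓ(1/|t|)) < ∞, where φ(t) = E e^{itX} is the characteristic function of X. -/
open MeasureTheory Filter Set Topology

noncomputable section

/-- `f` is slowly varying at infinity: `f(λx)/f(x) → 1` as `x → ∞` for every `λ > 0`. -/
def SlowlyVarying (f : ℝ → ℝ) : Prop :=
  ∀ lam : ℝ, 0 < lam → Filter.Tendsto (fun x => f (lam * x) / f x) Filter.atTop (nhds 1)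

/-- Characteristic function `φ(t) = E e^{itX}` of a random variable `X` on `(Ω, μ)`. -/
def charFn {Ω : Type*} [MeasurableSpace Ω] (μ : MeasureTheory.Measure Ω) (X : Ω → ℝ)
    (t : ℝ) : ℂ :=
  ∫ ω, Complex.exp (Complex.I * (t : ℂ) * (X ω : ℂ)) ∂μ

/-- The class `𝒫_r` of positive, bounded, right-continuous functions with positive
infimum on `[1, r]` that are multiplicatively `r`-periodic. -/
def MemP (r : ℝ) (p : ℝ → ℝ) : Prop :=
  (∀ x : ℝ, 0 < x → 0 < p x) ∧
  (∃ M : ℝ, ∀ x : ℝ, 0 < x → p x ≤ M) ∧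
  (∃ m : ℝ, 0 < m ∧ ∀ x ∈ Set.Icc (1 : ℝ) r, m ≤ p x) ∧
  (∀ x : ℝ, 0 < x → ContinuousWithinAt p (Set.Ici x) x) ∧
  (∀ x : ℝ, 0 < x → p (r * x) = p x)

/-- Renewal function `U(y) = ∑ₙ P(Sₙ ≤ y) = ∑ₙ F^{*n}(y)` of the iid sequence `X`. -/
def renewalFn {Ω : Type*} [MeasurableSpace Ω] (μ : MeasureTheory.Measure Ω)
    (X : ℕ → Ω → ℝ) (y : ℝ) : ℝ :=
  ∑' n : ℕ, (μ {ω | (∑ i ∈ Finset.range n, X i ω) ≤ y}).toReal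

/-- Truncated mean `L(x) = ∫₁ˣ P(Y > u) du`. -/
def truncTail {Ω : Type*} [MeasurableSpace Ω] (μ : MeasureTheory.Measure Ω)
    (Y : Ω → ℝ) (x : ℝ) : ℝ :=
  ∫ u in (1:ℝ)..x, (μ {ω | u < Y ω}).toReal

/-- Two-sided truncated mean `L(x) = ∫₁ˣ (P(Y > u) + P(Y ≤ -u)) du`. -/
def truncTail₂ {Ω : Type*} [MeasurableSpace Ω] (μ : MeasureTheory.Measure Ω)
    (Y : Ω → ℝ) (x : ℝ) : ℝ :=
  ∫ u in (1:ℝ)..x, ((μ {ω | u < Y ω}).toReal + (μ {ω | Y ω ≤ -u}).toReal)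

/-- Quantile function `Q(s) = inf {x : F(x) ≥ s}` of `Y`. -/
def quantileFn {Ω : Type*} [MeasurableSpace Ω] (μ : MeasureTheory.Measure Ω)
    (Y : Ω → ℝ) (s : ℝ) : ℝ :=
  sInf {x : ℝ | s ≤ (μ {ω | Y ω ≤ x}).toReal}

/-- Centering sequence `Cₙ = n ∫_{1/n}^{1-1/n} Q(s) ds`. -/
def centerSeq {Ω : Type*} [MeasurableSpace Ω] (μ : MeasureTheory.Measure Ω)
    (Y : Ω → ℝ) (n : ℕ) : ℝ :=
  (n : ℝ) * ∫ s in (1 / (n : ℝ))..(1 - 1 / (n : ℝ)), quantileFn μ Y s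


lemma aux_exp_bound (r : ℝ) :
    ‖Complex.exp (Complex.I * r) - 1‖ ≤ min 2 |r| := by
  refine le_min ?_ ?_
  · calc ‖Complex.exp (Complex.I * r) - 1‖
        ≤ ‖Complex.exp (Complex.I * r)‖ + ‖(1:ℂ)‖ :=
          norm_sub_le _ _
      _ ≤ 2 := by
          rw [show Complex.I * (r:ℂ) = (r:ℂ) * Complex.I by ring,
            Complex.norm_exp_ofReal_mul_I]
          norm_num
  · have hsq : ‖Complex.exp (Complex.I * r) - 1‖ ^ 2 ≤ |r| ^ 2 := by
      rw [Complex.sq_norm, show Complex.I * (r:ℂ) = (r:ℂ) * Complex.I by ring,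
        Complex.exp_mul_I]
      have hre : (Complex.cos r + Complex.sin r * Complex.I - 1).re = Real.cos r - 1 := by
        simp [Complex.cos_ofReal_re]
      have him : (Complex.cos r + Complex.sin r * Complex.I - 1).im = Real.sin r := by
        simp [Complex.sin_ofReal_re]
      rw [Complex.normSq_apply, hre, him]
      have h1 : 1 - r ^ 2 / 2 ≤ Real.cos r := Real.one_sub_sq_div_two_le_cos
      have h2 : Real.sin r ^ 2 + Real.cos r ^ 2 = 1 := Real.sin_sq_add_cos_sq r
      rw [sq_abs]
      nlinarith
    have := abs_le_of_sq_le_sq hsq (abs_nonneg r)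
    rwa [abs_of_nonneg (norm_nonneg _)] at this

lemma pow_rpow_aux (n : ℕ) (s : ℝ) : (((2:ℝ)⁻¹)^n) ^ s = ((2:ℝ) ^ (-s)) ^ n := by
  have h1 : ((2:ℝ)⁻¹)^n = (2:ℝ) ^ (-(n:ℝ)) := by
    rw [← Real.rpow_natCast ((2:ℝ)⁻¹) n, Real.inv_rpow (by norm_num : (0:ℝ) ≤ 2),
      ← Real.rpow_neg (by norm_num : (0:ℝ) ≤ 2)]
  have h2 : ((2:ℝ) ^ (-s)) ^ n = (2:ℝ) ^ (-(s * n)) := by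
    rw [← Real.rpow_natCast ((2:ℝ) ^ (-s)) n, ← Real.rpow_mul (by norm_num)]
    ring_nf
  rw [h1, h2, ← Real.rpow_mul (by norm_num : (0:ℝ) ≤ 2)]
  ring_nf


lemma dyadic_min_le (y : ℝ) (J : ℕ) :
    min 2 y ≤ 2 * (2⁻¹:ℝ)^J
      + ∑ j ∈ Finset.range (J+1), (if (2⁻¹:ℝ)^(j+1) < y then 2*(2⁻¹:ℝ)^j else 0) := by
  have hterm : ∀ j ∈ Finset.range (J+1),
      (0:ℝ) ≤ (if (2⁻¹:ℝ)^(j+1) < y then 2*(2⁻¹:ℝ)^j else 0) := by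
    intro j _; split <;> positivity
  by_cases hy : (2⁻¹:ℝ)^(J+1) < y
  · have hex : ∃ j : ℕ, (2⁻¹:ℝ)^(j+1) < y := ⟨J, hy⟩
    set j₀ := Nat.find hex with hj₀
    have hj₀le : j₀ ≤ J := Nat.find_le hy
    have hmem : j₀ ∈ Finset.range (J+1) := Finset.mem_range.2 (Nat.lt_succ_of_le hj₀le)
    have hspec : (2⁻¹:ℝ)^(j₀+1) < y := Nat.find_spec hex
    have hsingle : (if (2⁻¹:ℝ)^(j₀+1) < y then 2*(2⁻¹:ℝ)^j₀ else 0)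
        ≤ ∑ j ∈ Finset.range (J+1), (if (2⁻¹:ℝ)^(j+1) < y then 2*(2⁻¹:ℝ)^j else 0) :=
      Finset.single_le_sum hterm hmem
    rw [if_pos hspec] at hsingle
    have hmin : min 2 y ≤ 2*(2⁻¹:ℝ)^j₀ := by
      rcases Nat.eq_zero_or_pos j₀ with h0 | hpos
      · rw [h0]; simpa using min_le_left 2 y
      · obtain ⟨s, hs⟩ : ∃ s, j₀ = s + 1 := ⟨j₀ - 1, (Nat.succ_pred_eq_of_pos hpos).symm⟩
        have hns : ¬ ((2⁻¹:ℝ)^(s+1) < y) := Nat.find_min hex (by omega)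
        have hys : y ≤ (2⁻¹:ℝ)^(s+1) := not_lt.1 hns
        rw [hs]
        calc min 2 y ≤ y := min_le_right _ _
          _ ≤ (2⁻¹:ℝ)^(s+1) := hys
          _ ≤ 2*(2⁻¹:ℝ)^(s+1) := by nlinarith [pow_nonneg (by norm_num : (0:ℝ) ≤ 2⁻¹) (s+1)]
    have : (0:ℝ) ≤ 2 * (2⁻¹:ℝ)^J := by positivity
    linarith [hmin.trans hsingle]
  · have h1 : y ≤ (2⁻¹:ℝ)^(J+1) := not_lt.1 hy
    have h2 : (2⁻¹:ℝ)^(J+1) ≤ 2 * (2⁻¹:ℝ)^J := by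
      rw [pow_succ]
      nlinarith [pow_nonneg (by norm_num : (0:ℝ) ≤ 2⁻¹) J]
    have h3 : (0:ℝ) ≤ ∑ j ∈ Finset.range (J+1),
        (if (2⁻¹:ℝ)^(j+1) < y then 2*(2⁻¹:ℝ)^j else 0) := Finset.sum_nonneg hterm
    calc min 2 y ≤ y := min_le_right _ _
      _ ≤ 2 * (2⁻¹:ℝ)^J := h1.trans h2
      _ ≤ _ := by linarith

lemma charFn_bound {Ω : Type*} [MeasurableSpace Ω] (μ : MeasureTheory.Measure Ω)
    [IsProbabilityMeasure μ] (X : Ω → ℝ) (hXm : Measurable X) (t : ℝ) (ht : t ≠ 0) (J : ℕ) :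
    ‖1 - charFn μ X t‖ ≤ 2*(2⁻¹:ℝ)^J
      + ∑ j ∈ Finset.range (J+1),
          2*(2⁻¹:ℝ)^j * (μ {ω | (2⁻¹:ℝ)^(j+1)/|t| < |X ω|}).toReal := by
  have htpos : 0 < |t| := abs_pos.2 ht
  have hmeas : ∀ j : ℕ, MeasurableSet {ω | (2⁻¹:ℝ)^(j+1)/|t| < |X ω|} :=
    fun j => measurableSet_lt measurable_const hXm.abs
  have hexpm : Measurable fun ω => Complex.exp (Complex.I * (t:ℂ) * (X ω : ℂ)) := by
    fun_prop
  have hexpint : Integrable (fun ω => Complex.exp (Complex.I * (t:ℂ) * (X ω : ℂ))) μ := by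
    refine Integrable.mono' (integrable_const 1) hexpm.aestronglyMeasurable ?_
    filter_upwards with ω
    rw [Complex.norm_exp]
    simp
  set bnd : Ω → ℝ := fun ω => 2*(2⁻¹:ℝ)^J
      + ∑ j ∈ Finset.range (J+1),
          Set.indicator {ω | (2⁻¹:ℝ)^(j+1)/|t| < |X ω|} (fun _ => 2*(2⁻¹:ℝ)^j) ω with hbnd
  have hbndint : Integrable bnd μ := by
    refine (integrable_const _).add (integrable_finset_sum _ fun j _ => ?_)
    exact (integrable_const _).indicator (hmeas j)
  have h1 : (1:ℂ) - charFn μ X t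
      = ∫ ω, ((1:ℂ) - Complex.exp (Complex.I * (t:ℂ) * (X ω : ℂ))) ∂μ := by
    rw [integral_sub (integrable_const 1) hexpint, integral_const]
    simp [charFn]
  rw [h1]
  calc ‖∫ ω, ((1:ℂ) - Complex.exp (Complex.I * (t:ℂ) * (X ω : ℂ))) ∂μ‖
      ≤ ∫ ω, ‖(1:ℂ) - Complex.exp (Complex.I * (t:ℂ) * (X ω : ℂ))‖ ∂μ :=
        norm_integral_le_integral_norm _
    _ ≤ ∫ ω, bnd ω ∂μ := by
        refine integral_mono_of_nonneg (Filter.Eventually.of_forall fun ω => norm_nonneg _)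
          hbndint (Filter.Eventually.of_forall fun ω => ?_)
        have hpt : ‖(1:ℂ) - Complex.exp (Complex.I * (t:ℂ) * (X ω : ℂ))‖
            ≤ min 2 (|X ω| * |t|) := by
          rw [norm_sub_rev]
          have : Complex.I * (t:ℂ) * (X ω : ℂ) = Complex.I * ((t * X ω : ℝ) : ℂ) := by
            push_cast; ring
          rw [this]
          have hb := aux_exp_bound (t * X ω)
          calc ‖Complex.exp (Complex.I * ((t * X ω : ℝ):ℂ)) - 1‖ ≤ min 2 |t * X ω| := hb
            _ = min 2 (|X ω| * |t|) := by rw [abs_mul, mul_comm]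
        refine hpt.trans ((dyadic_min_le (|X ω| * |t|) J).trans (le_of_eq ?_))
        rw [hbnd]
        congr 1
        refine Finset.sum_congr rfl fun j _ => ?_
        rw [Set.indicator_apply]
        have : ω ∈ {ω | (2⁻¹:ℝ)^(j+1)/|t| < |X ω|} ↔ (2⁻¹:ℝ)^(j+1) < |X ω| * |t| := by
          rw [Set.mem_setOf_eq, div_lt_iff₀ htpos]
        simp only [this]
    _ = 2*(2⁻¹:ℝ)^J + ∑ j ∈ Finset.range (J+1),
          2*(2⁻¹:ℝ)^j * (μ {ω | (2⁻¹:ℝ)^(j+1)/|t| < |X ω|}).toReal := by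
        rw [hbnd, integral_add (integrable_const _)
          (integrable_finset_sum _ fun j _ => (integrable_const _).indicator (hmeas j)),
          integral_const, integral_finset_sum _ fun j _ => (integrable_const _).indicator (hmeas j)]
        simp only [smul_eq_mul, probReal_univ, one_mul]
        congr 1
        refine Finset.sum_congr rfl fun j _ => ?_
        rw [integral_indicator_const _ (hmeas j)]
        simp [mul_comm, measureReal_def]

set_option maxHeartbeats 1000000 in
theorem statement0
    {Ω : Type*} [MeasurableSpace Ω] (μ : MeasureTheory.Measure Ω) [IsProbabilityMeasure μ]
    (X : Ω → ℝ) (hXm : Measurable X)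
    (α : ℝ) (hα : α ∈ Set.Ioo (0:ℝ) 1)
    (ℓ h k : ℝ → ℝ)
    (hℓ : SlowlyVarying ℓ) (hℓpos : ∀ x : ℝ, 0 < x → 0 < ℓ x)
    (hh : (∀ x : ℝ, 0 < x → h x = 0) ∨
      ((∃ m : ℝ, 0 < m ∧ ∀ x : ℝ, 0 < x → m ≤ h x) ∧ (∃ M : ℝ, ∀ x : ℝ, 0 < x → h x ≤ M)))
    (hk : (∀ x : ℝ, 0 < x → k x = 0) ∨
      ((∃ m : ℝ, 0 < m ∧ ∀ x : ℝ, 0 < x → m ≤ k x) ∧ (∃ M : ℝ, ∀ x : ℝ, 0 < x → k x ≤ M)))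
    (hnz : ¬ ((∀ x : ℝ, 0 < x → h x = 0) ∧ (∀ x : ℝ, 0 < x → k x = 0)))
    (htailR : ∀ x : ℝ, 0 < x → (μ {ω | x < X ω}).toReal = ℓ x * x ^ (-α) * h x)
    (htailL : ∀ x : ℝ, 0 < x → (μ {ω | X ω ≤ -x}).toReal = ℓ x * x ^ (-α) * k x)
 :
    ∃ C : ℝ, ∀ᶠ t : ℝ in 𝓝[≠] (0:ℝ),
      ‖1 - charFn μ X t‖ / (|t| ^ α * ℓ (1 / |t|)) ≤ C := by
  obtain ⟨hα0, hα1⟩ := hα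
  -- bounds m ≤ h + k ≤ M
  obtain ⟨m, hm0, M, hmlb, hMub⟩ :
      ∃ m : ℝ, 0 < m ∧ ∃ M : ℝ, (∀ x, 0 < x → m ≤ h x + k x) ∧ (∀ x, 0 < x → h x + k x ≤ M) := by
    rcases hh with hh0 | ⟨⟨mh, hmh, hmh'⟩, ⟨Mh, hMh⟩⟩
    · rcases hk with hk0 | ⟨⟨mk, hmk, hmk'⟩, ⟨Mk, hMk⟩⟩
      · exact absurd ⟨hh0, hk0⟩ hnz
      · exact ⟨mk, hmk, Mk, fun x hx => by rw [hh0 x hx]; simpa using hmk' x hx,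
          fun x hx => by rw [hh0 x hx]; simpa using hMk x hx⟩
    · rcases hk with hk0 | ⟨⟨mk, hmk, hmk'⟩, ⟨Mk, hMk⟩⟩
      · exact ⟨mh, hmh, Mh, fun x hx => by rw [hk0 x hx]; simpa using hmh' x hx,
          fun x hx => by rw [hk0 x hx]; simpa using hMh x hx⟩
      · exact ⟨mh + mk, by positivity, Mh + Mk,
          fun x hx => add_le_add (hmh' x hx) (hmk' x hx),
          fun x hx => add_le_add (hMh x hx) (hMk x hx)⟩
  have hmM : m ≤ M := le_trans (hmlb 1 one_pos) (hMub 1 one_pos)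
  have hM0 : 0 < M := lt_of_lt_of_le hm0 hmM
  -- g and G
  set g : ℝ → ℝ := fun x => ℓ x * x ^ (-α) with hgdef
  have hgpos : ∀ x : ℝ, 0 < x → 0 < g x := fun x hx =>
    mul_pos (hℓpos x hx) (Real.rpow_pos_of_pos hx _)
  set G : ℝ → ℝ := fun x => (μ {ω | x < X ω}).toReal + (μ {ω | X ω ≤ -x}).toReal with hGdef
  have hGeq : ∀ x : ℝ, 0 < x → G x = g x * (h x + k x) := by
    intro x hx
    rw [hGdef]; simp only []
    rw [htailR x hx, htailL x hx, hgdef]; ring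
  have hGanti : ∀ x y : ℝ, x ≤ y → G y ≤ G x := by
    intro x y hxy
    have h1 : μ {ω | y < X ω} ≤ μ {ω | x < X ω} :=
      measure_mono fun ω hω => lt_of_le_of_lt hxy hω
    have h2 : μ {ω | X ω ≤ -y} ≤ μ {ω | X ω ≤ -x} := by
      apply measure_mono
      intro ω hω
      simp only [Set.mem_setOf_eq] at hω ⊢
      linarith
    exact add_le_add (ENNReal.toReal_mono (measure_ne_top _ _) h1)
      (ENNReal.toReal_mono (measure_ne_top _ _) h2)
  have habs_tail : ∀ u : ℝ, (μ {ω | u < |X ω|}).toReal ≤ G u := by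
    intro u
    have hsub : {ω | u < |X ω|} ⊆ {ω | u < X ω} ∪ {ω | X ω ≤ -u} := by
      intro ω hω
      rcases le_or_gt 0 (X ω) with hX | hX
      · left; rwa [Set.mem_setOf_eq, ← abs_of_nonneg hX]
      · right; rw [Set.mem_setOf_eq]
        have : |X ω| = -X ω := abs_of_neg hX
        rw [Set.mem_setOf_eq, this] at hω; linarith
    calc (μ {ω | u < |X ω|}).toReal
        ≤ (μ ({ω | u < X ω} ∪ {ω | X ω ≤ -u})).toReal :=
          ENNReal.toReal_mono (measure_ne_top _ _) (measure_mono hsub)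
      _ ≤ G u := by
          rw [hGdef]
          have := measure_union_le (μ := μ) {ω | u < X ω} {ω | X ω ≤ -u}
          have h2 := ENNReal.toReal_mono
            (ENNReal.add_ne_top.2 ⟨measure_ne_top _ _, measure_ne_top _ _⟩) this
          rwa [ENNReal.toReal_add (measure_ne_top _ _) (measure_ne_top _ _)] at h2
  -- almost decreasing
  have hgalmost : ∀ x y : ℝ, 0 < y → y ≤ x → g x ≤ (M/m) * g y := by
    intro x y hy hyx
    have hx : 0 < x := lt_of_lt_of_le hy hyx
    have h1 : m * g x ≤ G x := by
      rw [hGeq x hx]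
      have := hmlb x hx
      nlinarith [hgpos x hx]
    have h2 : G y ≤ M * g y := by
      rw [hGeq y hy]
      have := hMub y hy
      nlinarith [hgpos y hy]
    have h3 : m * g x ≤ M * g y := le_trans h1 (le_trans (hGanti y x hyx) h2)
    rw [div_mul_eq_mul_div, le_div_iff₀ hm0]
    nlinarith
  -- constants
  set r : ℝ := (2:ℝ) ^ (1-α) with hrdef
  have hr1 : 1 < r := Real.one_lt_rpow_iff_of_pos (by norm_num) |>.2 (Or.inl ⟨by norm_num, by linarith⟩)
  set A : ℝ := (1+r)/2 with hAdef
  have hA1 : 1 < A := by rw [hAdef]; linarith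
  have hAr : A < r := by rw [hAdef]; linarith
  have hA0 : 0 < A := by linarith
  set b : ℝ := (2:ℝ) ^ α with hbdef
  have hb0 : 0 < b := Real.rpow_pos_of_pos (by norm_num) _
  have hrb : r * b = 2 := by
    rw [hrdef, hbdef, ← Real.rpow_add (by norm_num : (0:ℝ) < 2)]
    norm_num
  set Qq : ℝ := A * b / 2 with hQdef
  have hQ0 : 0 < Qq := by positivity
  have hQ1 : Qq < 1 := by
    rw [hQdef, div_lt_one (by norm_num : (0:ℝ) < 2), ← hrb]
    exact mul_lt_mul_of_pos_right hAr hb0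
  set ρ : ℝ := r⁻¹ with hρdef
  have hρ0 : 0 < ρ := by rw [hρdef]; positivity
  -- slow variation thresholds
  obtain ⟨x₂, hx₂⟩ : ∃ x₂ : ℝ, ∀ x ≥ x₂, ℓ (2⁻¹ * x) / ℓ x < A :=
    eventually_atTop.1 ((hℓ 2⁻¹ (by norm_num)).eventually_lt_const hA1)
  obtain ⟨x₃, hx₃⟩ : ∃ x₃ : ℝ, ∀ x ≥ x₃, ρ < ℓ (2 * x) / ℓ x :=
    eventually_atTop.1 ((hℓ 2 (by norm_num)).eventually_const_lt
      (by rw [hρdef]; exact inv_lt_one_of_one_lt₀ hr1))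
  set x₀ : ℝ := max (max x₂ x₃) 1 with hx₀def
  have hx₀1 : 1 ≤ x₀ := le_max_right _ _
  have hx₀0 : 0 < x₀ := lt_of_lt_of_le one_pos hx₀1
  have hup : ∀ x : ℝ, x₀ ≤ x → ℓ (2⁻¹ * x) ≤ A * ℓ x := by
    intro x hx
    have hxpos : 0 < x := lt_of_lt_of_le hx₀0 hx
    have := hx₂ x (le_trans (le_trans (le_max_left x₂ x₃) (le_max_left _ _)) hx)
    rw [div_lt_iff₀ (hℓpos x hxpos)] at this
    linarith [this]
  have hlow : ∀ x : ℝ, x₀ ≤ x → ρ * ℓ x ≤ ℓ (2 * x) := by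
    intro x hx
    have hxpos : 0 < x := lt_of_lt_of_le hx₀0 hx
    have := hx₃ x (le_trans (le_trans (le_max_right x₂ x₃) (le_max_left _ _)) hx)
    rw [lt_div_iff₀ (hℓpos x hxpos)] at this
    linarith [this]
  -- chains
  have chainU : ∀ n : ℕ, ∀ x : ℝ, x₀ ≤ (2⁻¹:ℝ)^n * x → ℓ ((2⁻¹:ℝ)^n * x) ≤ A^n * ℓ x := by
    intro n
    induction n with
    | zero => intro x hx; simp
    | succ n ih =>
        intro x hx
        have hxpos : 0 < x := by
          by_contra hc
          push_neg at hc
          have : (2⁻¹:ℝ)^(n+1) * x ≤ 0 :=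
            mul_nonpos_of_nonneg_of_nonpos (by positivity) hc
          linarith
        have hmono : (2⁻¹:ℝ)^(n+1) * x ≤ (2⁻¹:ℝ)^n * x := by
          have : (2⁻¹:ℝ)^(n+1) ≤ (2⁻¹:ℝ)^n :=
            pow_le_pow_of_le_one (by norm_num) (by norm_num) (Nat.le_succ n)
          nlinarith
        have hx' : x₀ ≤ (2⁻¹:ℝ)^n * x := le_trans hx hmono
        have heq : (2⁻¹:ℝ)^(n+1) * x = 2⁻¹ * ((2⁻¹:ℝ)^n * x) := by ring
        rw [heq]
        calc ℓ (2⁻¹ * ((2⁻¹:ℝ)^n * x)) ≤ A * ℓ ((2⁻¹:ℝ)^n * x) := hup _ hx'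
          _ ≤ A * (A^n * ℓ x) := mul_le_mul_of_nonneg_left (ih x hx') hA0.le
          _ = A^(n+1) * ℓ x := by ring
  have chainL : ∀ n : ℕ, ∀ x : ℝ, x₀ ≤ x → ρ^n * ℓ x ≤ ℓ ((2:ℝ)^n * x) := by
    intro n
    induction n with
    | zero => intro x hx; simp
    | succ n ih =>
        intro x hx
        have hx2 : x₀ ≤ (2:ℝ)^n * x := by
          have h1 : (1:ℝ) ≤ (2:ℝ)^n := one_le_pow₀ (by norm_num)
          nlinarith [lt_of_lt_of_le hx₀0 hx]
        have heq : (2:ℝ)^(n+1) * x = 2 * ((2:ℝ)^n * x) := by ring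
        rw [heq]
        calc ρ^(n+1) * ℓ x = ρ * (ρ^n * ℓ x) := by ring
          _ ≤ ρ * ℓ ((2:ℝ)^n * x) := mul_le_mul_of_nonneg_left (ih x hx) hρ0.le
          _ ≤ ℓ (2 * ((2:ℝ)^n * x)) := hlow _ hx2
  -- lower bound for x^{1-α} ℓ x
  have hrρpow : ∀ n : ℕ, ((2:ℝ)^n : ℝ) ^ (1-α) * ρ^n = 1 := by
    intro n
    have h1 : ((2:ℝ)^n : ℝ) ^ (1-α) = r^n := by
      have := pow_rpow_aux n (-(1-α))
      rw [neg_neg] at this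
      rw [hrdef, ← this]
      rw [← Real.rpow_natCast ((2:ℝ)⁻¹) n, ← Real.rpow_natCast (2:ℝ) n]
      rw [Real.inv_rpow (by norm_num : (0:ℝ) ≤ 2), ← Real.rpow_neg (by norm_num : (0:ℝ) ≤ 2)]
      rw [← Real.rpow_mul (by norm_num : (0:ℝ) ≤ 2), ← Real.rpow_mul (by norm_num : (0:ℝ) ≤ 2)]
      ring_nf
    rw [h1, hρdef, ← mul_pow]
    rw [mul_inv_cancel₀ (by positivity : r ≠ 0)]
    exact one_pow n
  obtain ⟨c, hc0, hclb⟩ : ∃ c : ℝ, 0 < c ∧ ∀ x : ℝ, x₀ ≤ x → c ≤ x ^ (1-α) * ℓ x := by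
    have hℓx₀ : 0 < ℓ x₀ := hℓpos x₀ hx₀0
    have hrpx₀ : 0 < x₀ ^ (1-α) := Real.rpow_pos_of_pos hx₀0 _
    refine ⟨(m/(2*M)) * (x₀ ^ (1-α) * ℓ x₀), by positivity, ?_⟩
    intro x hx
    have hxpos : 0 < x := lt_of_lt_of_le hx₀0 hx
    -- dyadic points lower bound
    have hdy : ∀ n : ℕ, x₀ ^ (1-α) * ℓ x₀ ≤ ((2:ℝ)^n * x₀) ^ (1-α) * ℓ ((2:ℝ)^n * x₀) := by
      intro n
      have h1 : ρ^n * ℓ x₀ ≤ ℓ ((2:ℝ)^n * x₀) := chainL n x₀ le_rfl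
      have h2 : ((2:ℝ)^n * x₀) ^ (1-α) = ((2:ℝ)^n : ℝ) ^ (1-α) * x₀ ^ (1-α) :=
        Real.mul_rpow (by positivity) hx₀0.le
      rw [h2]
      have h3 := hrρpow n
      have hpw : (0:ℝ) < ((2:ℝ)^n : ℝ) ^ (1-α) := Real.rpow_pos_of_pos (by positivity) _
      have h4 : ((2:ℝ)^n : ℝ) ^ (1-α) * (ρ^n * ℓ x₀) = ℓ x₀ := by
        rw [show ((2:ℝ)^n : ℝ) ^ (1-α) * (ρ^n * ℓ x₀) = (((2:ℝ)^n : ℝ) ^ (1-α) * ρ^n) * ℓ x₀ by ring, h3, one_mul]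
      calc x₀ ^ (1-α) * ℓ x₀ = x₀ ^ (1-α) * (((2:ℝ)^n : ℝ) ^ (1-α) * (ρ^n * ℓ x₀)) := by rw [h4]
        _ = ((2:ℝ)^n : ℝ) ^ (1-α) * x₀ ^ (1-α) * (ρ^n * ℓ x₀) := by ring
        _ ≤ ((2:ℝ)^n : ℝ) ^ (1-α) * x₀ ^ (1-α) * ℓ ((2:ℝ)^n * x₀) := by
            apply mul_le_mul_of_nonneg_left h1 (by positivity)
    -- pick n
    have hex : ∃ n : ℕ, x ≤ (2:ℝ)^n * x₀ := by
      obtain ⟨n, hn⟩ := pow_unbounded_of_one_lt (x / x₀) (one_lt_two)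
      exact ⟨n, by rw [div_lt_iff₀ hx₀0] at hn; nlinarith⟩
    set n := Nat.find hex with hndef
    have hn : x ≤ (2:ℝ)^n * x₀ := Nat.find_spec hex
    set z : ℝ := (2:ℝ)^n * x₀ with hzdef
    have hz0 : 0 < z := by positivity
    have hgz : g z ≤ (M/m) * g x := hgalmost z x hxpos hn
    have hxg : x ^ (1-α) * ℓ x = x * g x := by
      rw [hgdef]
      have : x ^ (1-α) = x * x ^ (-α) := by
        rw [show (1-α) = 1 + (-α) by ring, Real.rpow_add hxpos, Real.rpow_one]
      rw [this]; ring
    have hzg : z ^ (1-α) * ℓ z = z * g z := by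
      rw [hgdef]
      have : z ^ (1-α) = z * z ^ (-α) := by
        rw [show (1-α) = 1 + (-α) by ring, Real.rpow_add hz0, Real.rpow_one]
      rw [this]; ring
    have hzx : z ≤ 2 * x := by
      rcases Nat.eq_zero_or_pos n with h0 | hpos
      · rw [hzdef, h0, pow_zero, one_mul]; nlinarith
      · obtain ⟨s, hs⟩ : ∃ s, n = s + 1 := ⟨n - 1, (Nat.succ_pred_eq_of_pos hpos).symm⟩
        have hns : ¬ (x ≤ (2:ℝ)^s * x₀) := Nat.find_min hex (by omega)
        push_neg at hns
        rw [hzdef, hs]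
        rw [pow_succ]
        nlinarith
    -- combine
    have hgx0 : 0 < g x := hgpos x hxpos
    have hgz0 : 0 < g z := hgpos z hz0
    have hdyn : x₀ ^ (1-α) * ℓ x₀ ≤ z * g z := by rw [← hzg]; exact hdy n
    rw [hxg]
    have h5 : m * g z ≤ M * g x := by
      rw [div_mul_eq_mul_div, le_div_iff₀ hm0] at hgz
      nlinarith
    have hA' : z * (m * g z) ≤ (2*x) * (m * g z) :=
      mul_le_mul_of_nonneg_right hzx (by positivity)
    have hB' : (2*x) * (m * g z) ≤ (2*x) * (M * g x) :=
      mul_le_mul_of_nonneg_left h5 (by positivity)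
    have step : (m/(2*M)) * (z * g z) ≤ x * g x := by
      rw [div_mul_eq_mul_div, div_le_iff₀ (by positivity : (0:ℝ) < 2*M)]
      nlinarith [hA', hB']
    calc (m/(2*M)) * (x₀ ^ (1-α) * ℓ x₀) ≤ (m/(2*M)) * (z * g z) := by
          apply mul_le_mul_of_nonneg_left hdyn (by positivity)
      _ ≤ x * g x := step
  -- main part
  set C₁ : ℝ := 2*M*A*b * (1-Qq)⁻¹ with hC₁def
  refine ⟨C₁ + 8*x₀/c, ?_⟩
  have hev1 : ∀ᶠ t : ℝ in 𝓝[≠] (0:ℝ), |t| < 1/(4*x₀) := by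
    apply Filter.Eventually.filter_mono nhdsWithin_le_nhds
    have := eventually_abs_sub_lt (0:ℝ) (by positivity : (0:ℝ) < 1/(4*x₀))
    simpa using this
  have hev2 : ∀ᶠ t : ℝ in 𝓝[≠] (0:ℝ), t ≠ 0 := by
    filter_upwards [self_mem_nhdsWithin] with t ht
    simpa using ht
  filter_upwards [hev1, hev2] with t hts ht0
  have htpos : 0 < |t| := abs_pos.2 ht0
  set x : ℝ := 1/|t| with hxdef
  have hxpos : 0 < x := by positivity
  have hx4 : 4*x₀ < x := by
    have := one_div_lt_one_div_of_lt htpos hts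
    rwa [one_div_one_div] at this
  have hxx₀ : x₀ ≤ x := by nlinarith
  have hℓx : 0 < ℓ x := hℓpos x hxpos
  have hxα : 0 < x ^ (-α) := Real.rpow_pos_of_pos hxpos _
  have hxt : x * |t| = 1 := by rw [hxdef]; field_simp
  -- choice of J
  have hex : ∃ n : ℕ, (2⁻¹:ℝ)^n * x < x₀ := by
    obtain ⟨n, hn⟩ := exists_pow_lt_of_lt_one (div_pos hx₀0 hxpos) (by norm_num : (2⁻¹:ℝ) < 1)
    refine ⟨n, ?_⟩
    rw [lt_div_iff₀ hxpos] at hn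
    linarith
  set N := Nat.find hex with hNdef
  have hN2 : 2 ≤ N := by
    rw [hNdef, Nat.le_find_iff]
    intro n hn
    interval_cases n
    · simp only [pow_zero, one_mul]; push_neg; nlinarith
    · simp only [pow_one]; push_neg; nlinarith
  set J := N - 2 with hJdef
  have hNJ : N = J + 2 := by omega
  have hgood : ∀ j : ℕ, j ≤ J + 1 → x₀ ≤ (2⁻¹:ℝ)^j * x := by
    intro j hj
    have hjN : j < N := by omega
    have := Nat.find_min hex hjN
    push_neg at this
    exact this
  have hNlt : (2⁻¹:ℝ)^(J+2) * x < x₀ := by rw [← hNJ]; exact Nat.find_spec hex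
  have hrem : 2*(2⁻¹:ℝ)^J ≤ 8*x₀*|t| := by
    have h1 : (2⁻¹:ℝ)^(J+2) = (2⁻¹:ℝ)^J / 4 := by rw [pow_succ, pow_succ]; ring
    rw [h1] at hNlt
    nlinarith [mul_lt_mul_of_pos_right hNlt htpos, hxt,
      pow_pos (by norm_num : (0:ℝ) < 2⁻¹) J]
  -- bound the sum terms
  have hterm : ∀ j ∈ Finset.range (J+1),
      2*(2⁻¹:ℝ)^j * (μ {ω | (2⁻¹:ℝ)^(j+1)/|t| < |X ω|}).toReal
        ≤ (2*M*A*b * (ℓ x * x ^ (-α))) * Qq^j := by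
    intro j hj
    have hjle : j + 1 ≤ J + 1 := by
      rw [Finset.mem_range] at hj; omega
    have hu : (2⁻¹:ℝ)^(j+1)/|t| = (2⁻¹:ℝ)^(j+1) * x := by rw [hxdef]; field_simp
    set u : ℝ := (2⁻¹:ℝ)^(j+1) * x with hudef
    have hux₀ : x₀ ≤ u := hgood (j+1) hjle
    have hu0 : 0 < u := lt_of_lt_of_le hx₀0 hux₀
    have h1 : (μ {ω | (2⁻¹:ℝ)^(j+1)/|t| < |X ω|}).toReal ≤ G u := by
      rw [hu]; exact habs_tail u
    have h2 : G u ≤ M * g u := by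
      rw [hGeq u hu0]
      nlinarith [hgpos u hu0, hMub u hu0]
    have h3 : ℓ u ≤ A^(j+1) * ℓ x := chainU (j+1) x hux₀
    have h4 : u ^ (-α) = b^(j+1) * x ^ (-α) := by
      rw [hudef, Real.mul_rpow (by positivity) hxpos.le, pow_rpow_aux (j+1) (-α), neg_neg,
        hbdef]
    have h5 : g u ≤ A^(j+1) * ℓ x * (b^(j+1) * x ^ (-α)) := by
      have hnn : (0:ℝ) ≤ b^(j+1) * x ^ (-α) := by positivity
      calc g u = ℓ u * (b^(j+1) * x ^ (-α)) := by rw [hgdef]; simp only []; rw [h4]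
        _ ≤ A^(j+1) * ℓ x * (b^(j+1) * x ^ (-α)) := mul_le_mul_of_nonneg_right h3 hnn
    have h6 : (μ {ω | (2⁻¹:ℝ)^(j+1)/|t| < |X ω|}).toReal
        ≤ M * (A^(j+1) * ℓ x * (b^(j+1) * x ^ (-α))) :=
      le_trans h1 (le_trans h2 (mul_le_mul_of_nonneg_left h5 hM0.le))
    calc 2*(2⁻¹:ℝ)^j * (μ {ω | (2⁻¹:ℝ)^(j+1)/|t| < |X ω|}).toReal
        ≤ 2*(2⁻¹:ℝ)^j * (M * (A^(j+1) * ℓ x * (b^(j+1) * x ^ (-α)))) :=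
          mul_le_mul_of_nonneg_left h6 (by positivity)
      _ = (2*M*A*b * (ℓ x * x ^ (-α))) * Qq^j := by
          have hQpow : Qq^j = A^j * b^j * (2⁻¹:ℝ)^j := by
            rw [hQdef, div_eq_mul_inv, mul_pow, mul_pow]
          rw [hQpow]
          ring
  have hgeo : ∑ j ∈ Finset.range (J+1), Qq^j ≤ (1-Qq)⁻¹ := by
    have hsummable := summable_geometric_of_lt_one hQ0.le hQ1
    have := Summable.sum_le_tsum (Finset.range (J+1)) (fun i _ => by positivity) hsummable
    rwa [tsum_geometric_of_lt_one hQ0.le hQ1] at this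
  have hsum : ∑ j ∈ Finset.range (J+1),
      2*(2⁻¹:ℝ)^j * (μ {ω | (2⁻¹:ℝ)^(j+1)/|t| < |X ω|}).toReal
        ≤ C₁ * (ℓ x * x ^ (-α)) := by
    calc ∑ j ∈ Finset.range (J+1),
        2*(2⁻¹:ℝ)^j * (μ {ω | (2⁻¹:ℝ)^(j+1)/|t| < |X ω|}).toReal
        ≤ ∑ j ∈ Finset.range (J+1), (2*M*A*b * (ℓ x * x ^ (-α))) * Qq^j :=
          Finset.sum_le_sum hterm
      _ = (2*M*A*b * (ℓ x * x ^ (-α))) * ∑ j ∈ Finset.range (J+1), Qq^j := by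
          rw [Finset.mul_sum]
      _ ≤ (2*M*A*b * (ℓ x * x ^ (-α))) * (1-Qq)⁻¹ := by
          apply mul_le_mul_of_nonneg_left hgeo
          positivity
      _ = C₁ * (ℓ x * x ^ (-α)) := by rw [hC₁def]; ring
  -- remainder vs denominator
  have h8 : c * |t| ≤ ℓ x * x ^ (-α) := by
    have h9 : c ≤ x ^ (1-α) * ℓ x := hclb x hxx₀
    have h10 : x ^ (1-α) = x * x ^ (-α) := by
      rw [show (1-α) = 1 + (-α) by ring, Real.rpow_add hxpos, Real.rpow_one]
    rw [h10] at h9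
    calc c * |t| ≤ (x * x ^ (-α) * ℓ x) * |t| :=
          mul_le_mul_of_nonneg_right h9 htpos.le
      _ = (x * |t|) * (ℓ x * x ^ (-α)) := by ring
      _ = ℓ x * x ^ (-α) := by rw [hxt, one_mul]
  have hrem2 : 8*x₀*|t| ≤ (8*x₀/c) * (ℓ x * x ^ (-α)) := by
    rw [div_mul_eq_mul_div, le_div_iff₀ hc0] at *
    nlinarith [h8, hx₀0.le, htpos.le]
  -- denominator identification
  have hden : |t| ^ α * ℓ (1/|t|) = ℓ x * x ^ (-α) := by
    have hxneg : x ^ (-α) = |t| ^ α := by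
      rw [hxdef, one_div, Real.inv_rpow (abs_nonneg t), ← Real.rpow_neg (abs_nonneg t),
        neg_neg]
    rw [← hxdef, hxneg]; ring
  have hDpos : 0 < |t| ^ α * ℓ (1/|t|) := by rw [hden]; positivity
  rw [div_le_iff₀ hDpos, hden]
  calc ‖1 - charFn μ X t‖
      ≤ 2*(2⁻¹:ℝ)^J + ∑ j ∈ Finset.range (J+1),
          2*(2⁻¹:ℝ)^j * (μ {ω | (2⁻¹:ℝ)^(j+1)/|t| < |X ω|}).toReal :=
        charFn_bound μ X hXm t ht0 J
    _ ≤ 8*x₀*|t| + C₁ * (ℓ x * x ^ (-α)) := add_le_add hrem hsum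
    _ ≤ (8*x₀/c) * (ℓ x * x ^ (-α)) + C₁ * (ℓ x * x ^ (-α)) := by linarith [hrem2]
    _ = (C₁ + 8*x₀/c) * (ℓ x * x ^ (-α)) := by ring
end
end

section
/- Let X satisfy the two-sided tail condition with index α ∈ (0,2). Then liminf_{t→0} Re(1 − φ(t)) / (|t|^α ℓ(1/|t|)) > 0. -/
open MeasureTheory Filter Set Topology

noncomputable section

lemma one_sub_cos_lower {u ε : ℝ} (hε : 0 < ε) (h1 : ε ≤ |u|) (h2 : |u| ≤ 1) :
    ε ^ 2 / 4 ≤ 1 - Real.cos u := by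
  have hcos : Real.cos u = Real.cos |u| := (Real.cos_abs u).symm
  set x : ℝ := |u| / 2 with hxdef
  have hx0 : 0 < x := by
    have : 0 < |u| := lt_of_lt_of_le hε h1
    positivity
  have hx1 : x ≤ 1 := by
    rw [hxdef]; linarith
  have hs := Real.sin_gt_sub_cube hx0
  have hid : 1 - Real.cos |u| = 2 * Real.sin x ^ 2 := by
    have hc := Real.cos_sq x
    have hp := Real.sin_sq_add_cos_sq x
    have : 2 * x = |u| := by rw [hxdef]; ring
    rw [this] at hc
    linarith
  rw [hcos, hid]
  have hx_half : x ≤ 1/2 := by rw [hxdef]; linarith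
  have hslb : (15 : ℝ) / 16 * x ≤ Real.sin x := by nlinarith [hs, hx_half, hx0, sq_nonneg x, mul_pos hx0 hx0]
  have hs0 : 0 ≤ Real.sin x := by nlinarith
  nlinarith [sq_nonneg (Real.sin x - 15/16 * x), h1, hε.le]

lemma charFn_re_eq {Ω : Type*} [MeasurableSpace Ω] (μ : Measure Ω) [IsProbabilityMeasure μ]
    (X : Ω → ℝ) (hXm : Measurable X) (t : ℝ) :
    (1 - charFn μ X t).re = ∫ ω, (1 - Real.cos (t * X ω)) ∂μ := by
  have hrw : ∀ ω, Complex.exp (Complex.I * (t : ℂ) * (X ω : ℂ)) =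
      Complex.exp (((t * X ω : ℝ) : ℂ) * Complex.I) := by
    intro ω; push_cast; ring_nf
  have hmeas : Measurable fun ω => Complex.exp (((t * X ω : ℝ) : ℂ) * Complex.I) := by
    apply Complex.measurable_exp.comp
    exact (Complex.measurable_ofReal.comp ((measurable_const.mul hXm))).mul measurable_const
  have hint : Integrable (fun ω => Complex.exp (((t * X ω : ℝ) : ℂ) * Complex.I)) μ := by
    apply Integrable.mono' (integrable_const (1:ℝ)) hmeas.aestronglyMeasurable
    filter_upwards with ω
    rw [Complex.norm_exp_ofReal_mul_I]
  have hcosint : Integrable (fun ω => Real.cos (t * X ω)) μ := by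
    apply Integrable.mono' (integrable_const (1:ℝ))
      ((Real.measurable_cos.comp (measurable_const.mul hXm)).aestronglyMeasurable)
    filter_upwards with ω
    exact Real.abs_cos_le_one _
  have h1 : charFn μ X t = ∫ ω, Complex.exp (((t * X ω : ℝ) : ℂ) * Complex.I) ∂μ := by
    unfold charFn; exact integral_congr_ae (Filter.Eventually.of_forall hrw)
  rw [Complex.sub_re, Complex.one_re, h1]
  have h3 : (∫ ω, Complex.exp (((t * X ω : ℝ) : ℂ) * Complex.I) ∂μ).re
      = ∫ ω, Real.cos (t * X ω) ∂μ := by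
    rw [← RCLike.re_to_complex, ← integral_re hint]
    apply integral_congr_ae
    filter_upwards with ω
    rw [RCLike.re_to_complex]
    exact Complex.exp_ofReal_mul_I_re _
  rw [h3, integral_sub (integrable_const 1) hcosint, integral_const]
  simp

lemma aux_lower {Ω : Type*} [MeasurableSpace Ω] (μ : Measure Ω) [IsProbabilityMeasure μ]
    (X : Ω → ℝ) (hXm : Measurable X)
    (α : ℝ) (hα : 0 < α) (ℓ : ℝ → ℝ)
    (hℓ : SlowlyVarying ℓ) (hℓpos : ∀ x : ℝ, 0 < x → 0 < ℓ x)
    (E : ℝ → Set Ω) (hE : ∀ a : ℝ, MeasurableSet (E a))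
    (hEsub : ∀ a b : ℝ, a ≤ b → E b ⊆ E a)
    (hlow : ∀ a : ℝ, 0 < a → ∀ ω ∈ E a, a ≤ |X ω|)
    (hup : ∀ a b : ℝ, 0 < a → ∀ ω ∈ E a, ω ∉ E b → |X ω| ≤ b)
    (g : ℝ → ℝ) (m M : ℝ) (hm : 0 < m)
    (hgm : ∀ x : ℝ, 0 < x → m ≤ g x) (hgM : ∀ x : ℝ, 0 < x → g x ≤ M)
    (htail : ∀ x : ℝ, 0 < x → (μ (E x)).toReal = ℓ x * x ^ (-α) * g x) :
    ∃ c : ℝ, 0 < c ∧ ∀ᶠ t : ℝ in 𝓝[≠] (0:ℝ),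
      c ≤ (1 - charFn μ X t).re / (|t| ^ α * ℓ (1 / |t|)) := by
  have hM : 0 < M := hm.trans_le ((hgm 1 one_pos).trans (hgM 1 one_pos))
  have hmM : m / (4 * M) < 1 := by
    rw [div_lt_one (by positivity)]
    nlinarith [(hgm 1 one_pos).trans (hgM 1 one_pos)]
  set ε : ℝ := (m / (4 * M)) ^ (α⁻¹ : ℝ) with hεdef
  have hε0 : 0 < ε := Real.rpow_pos_of_pos (by positivity) _
  have hε1 : ε < 1 := Real.rpow_lt_one (by positivity) hmM (by positivity)
  have hεα : ε ^ α = m / (4 * M) := Real.rpow_inv_rpow (by positivity) hα.ne'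
  have hεneg : ε ^ (-α) = 4 * M / m := by
    rw [Real.rpow_neg hε0.le, hεα]
    field_simp
  -- slow variation
  obtain ⟨R₀, hR₀⟩ := Filter.eventually_atTop.1
    ((hℓ ε hε0).eventually (eventually_ge_nhds (by norm_num : (1:ℝ)/2 < 1)))
  set R : ℝ := max R₀ 1 with hRdef
  have hR0 : 0 < R := lt_of_lt_of_le one_pos (le_max_right _ _)
  refine ⟨ε ^ 2 / 4 * M, by positivity, ?_⟩
  have hev : ∀ᶠ t : ℝ in 𝓝 (0:ℝ), |t| < R⁻¹ := by
    have := eventually_abs_sub_lt (0:ℝ) (show (0:ℝ) < R⁻¹ by positivity)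
    simpa using this
  filter_upwards [self_mem_nhdsWithin, eventually_nhdsWithin_of_eventually_nhds hev]
    with t ht0 htR
  have ht0' : t ≠ 0 := ht0
  have habs : 0 < |t| := abs_pos.2 ht0'
  set T : ℝ := |t|⁻¹ with hTdef
  have hT0 : 0 < T := by positivity
  have hRT : R ≤ T := by
    have h1 : |t| < R⁻¹ := htR
    have := (inv_lt_inv₀ (by positivity) habs).2 h1
    rw [inv_inv] at this
    exact this.le
  have hT1 : 1 ≤ T := (le_max_right R₀ 1).trans hRT
  have hslow : ℓ T / 2 ≤ ℓ (ε * T) := by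
    have h1 := hR₀ T ((le_max_left R₀ 1).trans hRT)
    have h2 := hℓpos T hT0
    rw [le_div_iff₀ h2] at h1
    linarith
  have hεT : 0 < ε * T := by positivity
  have hεTT : ε * T ≤ T := by nlinarith
  -- measure arithmetic
  set A : Set Ω := E (ε * T) \ E T with hAdef
  have hAmeas : MeasurableSet A := (hE _).diff (hE _)
  have hsub : E T ⊆ E (ε * T) := hEsub _ _ hεTT
  have hms : (μ (E (ε * T))).toReal = (μ A).toReal + (μ (E T)).toReal := by
    rw [← ENNReal.toReal_add (measure_ne_top μ _) (measure_ne_top μ _),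
      ← measure_union (disjoint_sdiff_left) (hE T), Set.diff_union_of_subset hsub]
  have hTα : 0 < T ^ (-α) := Real.rpow_pos_of_pos hT0 _
  have hℓT : 0 < ℓ T := hℓpos T hT0
  have hp1 : 2 * (M * (ℓ T * T ^ (-α))) ≤ (μ (E (ε * T))).toReal := by
    rw [htail _ hεT, Real.mul_rpow hε0.le hT0.le, hεneg]
    have hℓεT := hℓpos _ hεT
    have h4 : 0 ≤ 4 * M / m * T ^ (-α) := by positivity
    have h1 : (ℓ T / 2) * (4 * M / m * T ^ (-α)) * m ≤
        ℓ (ε * T) * (4 * M / m * T ^ (-α)) * g (ε * T) :=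
      mul_le_mul (mul_le_mul_of_nonneg_right hslow h4) (hgm _ hεT) hm.le
        (mul_nonneg hℓεT.le h4)
    calc 2 * (M * (ℓ T * T ^ (-α))) = (ℓ T / 2) * (4 * M / m * T ^ (-α)) * m := by
          field_simp; ring
      _ ≤ _ := h1
  have hp2 : (μ (E T)).toReal ≤ M * (ℓ T * T ^ (-α)) := by
    rw [htail _ hT0]
    have h5 : ℓ T * T ^ (-α) * g T ≤ ℓ T * T ^ (-α) * M :=
      mul_le_mul_of_nonneg_left (hgM T hT0) (mul_pos hℓT hTα).le
    linarith
  have hkey : M * (ℓ T * T ^ (-α)) ≤ (μ A).toReal := by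
    have := hms; linarith
  -- integral bound
  have hAset : ∀ ω ∈ A, ε ^ 2 / 4 ≤ 1 - Real.cos (t * X ω) := by
    intro ω hω
    obtain ⟨h1, h2⟩ := hω
    have hx1 : ε * T ≤ |X ω| := hlow _ hεT ω h1
    have hx2 : |X ω| ≤ T := hup _ _ hεT ω h1 h2
    have htinv : |t| * T = 1 := mul_inv_cancel₀ habs.ne'
    apply one_sub_cos_lower hε0
    · rw [abs_mul]
      calc ε = ε * (|t| * T) := by rw [htinv]; ring
        _ = |t| * (ε * T) := by ring
        _ ≤ |t| * |X ω| := by gcongr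
    · rw [abs_mul]
      calc |t| * |X ω| ≤ |t| * T := by gcongr
        _ = 1 := htinv
  have hcosint : Integrable (fun ω => 1 - Real.cos (t * X ω)) μ := by
    exact (integrable_const 1).sub (by
      apply Integrable.mono' (integrable_const (1:ℝ))
        ((Real.measurable_cos.comp (measurable_const.mul hXm)).aestronglyMeasurable)
      filter_upwards with ω
      exact Real.abs_cos_le_one _)
  have hnn : 0 ≤ᵐ[μ] fun ω => 1 - Real.cos (t * X ω) := by
    filter_upwards with ω
    simp only [Pi.zero_apply, sub_nonneg]
    exact Real.cos_le_one _
  have hchain : ε ^ 2 / 4 * (μ A).toReal ≤ (1 - charFn μ X t).re := by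
    rw [charFn_re_eq μ X hXm t]
    calc ε ^ 2 / 4 * (μ A).toReal ≤ ∫ ω in A, (1 - Real.cos (t * X ω)) ∂μ :=
          setIntegral_ge_of_const_le_real hAmeas (measure_ne_top μ _) hAset hcosint.integrableOn
      _ ≤ ∫ ω, (1 - Real.cos (t * X ω)) ∂μ := setIntegral_le_integral hcosint hnn
  -- conclude
  have hD : 0 < |t| ^ α * ℓ (1 / |t|) := by
    have : (0:ℝ) < 1 / |t| := by positivity
    exact mul_pos (Real.rpow_pos_of_pos habs α) (hℓpos _ this)
  rw [le_div_iff₀ hD]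
  have htT : T ^ (-α) = |t| ^ α := by
    rw [hTdef, Real.inv_rpow habs.le, Real.rpow_neg habs.le, inv_inv]
  have hlT : ℓ (1 / |t|) = ℓ T := by rw [hTdef, one_div]
  calc ε ^ 2 / 4 * M * (|t| ^ α * ℓ (1 / |t|)) = ε ^ 2 / 4 * (M * (ℓ T * T ^ (-α))) := by
        rw [htT, hlT]; ring
    _ ≤ ε ^ 2 / 4 * (μ A).toReal :=
        mul_le_mul_of_nonneg_left hkey (by positivity)
    _ ≤ (1 - charFn μ X t).re := hchain

theorem statement6
    {Ω : Type*} [MeasurableSpace Ω] (μ : MeasureTheory.Measure Ω) [IsProbabilityMeasure μ]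
    (X : Ω → ℝ) (hXm : Measurable X)
    (α : ℝ) (hα : α ∈ Set.Ioo (0:ℝ) 2)
    (ℓ h k : ℝ → ℝ)
    (hℓ : SlowlyVarying ℓ) (hℓpos : ∀ x : ℝ, 0 < x → 0 < ℓ x)
    (hh : (∀ x : ℝ, 0 < x → h x = 0) ∨
      ((∃ m : ℝ, 0 < m ∧ ∀ x : ℝ, 0 < x → m ≤ h x) ∧ (∃ M : ℝ, ∀ x : ℝ, 0 < x → h x ≤ M)))
    (hk : (∀ x : ℝ, 0 < x → k x = 0) ∨
      ((∃ m : ℝ, 0 < m ∧ ∀ x : ℝ, 0 < x → m ≤ k x) ∧ (∃ M : ℝ, ∀ x : ℝ, 0 < x → k x ≤ M)))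
    (hnz : ¬ ((∀ x : ℝ, 0 < x → h x = 0) ∧ (∀ x : ℝ, 0 < x → k x = 0)))
    (htailR : ∀ x : ℝ, 0 < x → (μ {ω | x < X ω}).toReal = ℓ x * x ^ (-α) * h x)
    (htailL : ∀ x : ℝ, 0 < x → (μ {ω | X ω ≤ -x}).toReal = ℓ x * x ^ (-α) * k x)
 :
    ∃ c : ℝ, 0 < c ∧ ∀ᶠ t : ℝ in 𝓝[≠] (0:ℝ),
      c ≤ (1 - charFn μ X t).re / (|t| ^ α * ℓ (1 / |t|)) := by
  rcases hh with hh0 | ⟨⟨m, hm, hml⟩, ⟨M, hMu⟩⟩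
  · -- right tail vanishes; use left tail
    rcases hk with hk0 | ⟨⟨m, hm, hml⟩, ⟨M, hMu⟩⟩
    · exact absurd ⟨hh0, hk0⟩ hnz
    · apply aux_lower μ X hXm α hα.1 ℓ hℓ hℓpos (fun a => {ω | X ω ≤ -a})
        (fun a => hXm measurableSet_Iic)
        (fun a b hab ω (hω : X ω ≤ -b) => by simp only [Set.mem_setOf_eq]; linarith)
        (fun a ha ω (hω : X ω ≤ -a) => by
          have : a ≤ -X ω := by linarith
          exact this.trans (neg_le_abs _))
        (fun a b ha ω (hω : X ω ≤ -a) (hω' : ¬ (X ω ≤ -b)) => by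
          push_neg at hω'
          have hXneg : X ω < 0 := by linarith
          rw [abs_of_neg hXneg]; linarith)
        k m M hm hml hMu htailL
  · -- right tail positive
    apply aux_lower μ X hXm α hα.1 ℓ hℓ hℓpos (fun a => {ω | a < X ω})
      (fun a => hXm measurableSet_Ioi)
      (fun a b hab ω (hω : b < X ω) => by simp only [Set.mem_setOf_eq]; linarith)
      (fun a ha ω (hω : a < X ω) => hω.le.trans (le_abs_self _))
      (fun a b ha ω (hω : a < X ω) (hω' : ¬ (b < X ω)) => by
        push_neg at hω'
        rw [abs_of_pos (ha.trans hω)]; exact hω')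
      h m M hm hml hMu htailR
end
end
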